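/- Let α be a type. Let 𝒜 be a pairwise disjoint family of nonempty subsets of (α → Bool) each of which is a cylinder over some finite set of coordinates, i.e., each A ∈ 𝒜 has the form {v : α → Bool | ∀ p ∈ S, v p = u p} for some finite S ⊆ α and some u : α → Bool. Then 𝒜 is countable. -/

import Mathlib

/-- Counting lemma: the number of functions on `T` agreeing with `u` on `S ⊆ T`
is `2 ^ (T.card - S.card)`. -/
lemma cyl_filter_card {α : Type*} [DecidableEq α] (T S : Finset α) (hST : S ⊆ T)
    (u : α → Bool) :
    (Finset.univ.filter fun w : (↥T) → Bool => ∀ p : ↥T, ↑p ∈ S → w p = u ↑p).card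
      = 2 ^ (T.card - S.card) := by
  rw [← Fintype.card_subtype]
  have e : {w : (↥T) → Bool // ∀ p : ↥T, ↑p ∈ S → w p = u ↑p}
      ≃ ({p : ↥T // ¬ (↑p ∈ S)} → Bool) :=
    { toFun := fun w q => w.1 q.1
      invFun := fun g => ⟨fun p => if h : ↑p ∈ S then u ↑p else g ⟨p, h⟩, by
        intro p hp; simp [hp]⟩
      left_inv := by
        intro w; ext p
        by_cases h : (↑p : α) ∈ S
        · simp [h, w.2 p h]
        · simp [h]
      right_inv := by
        intro g; ext q
        simp [q.2] }
  rw [Fintype.card_congr e, Fintype.card_fun, Fintype.card_bool]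
  congr 1
  rw [Fintype.card_subtype_compl]
  have e2 : {p : ↥T // (↑p : α) ∈ S} ≃ ↥S :=
    { toFun := fun q => ⟨q.1.1, q.2⟩
      invFun := fun s => ⟨⟨s.1, hST s.2⟩, s.2⟩
      left_inv := fun q => rfl
      right_inv := fun s => rfl }
  rw [Fintype.card_congr e2, Fintype.card_coe, Fintype.card_coe]

/-- Key finite bound: a pairwise disjoint finite family of cylinders, each over at most
`n` coordinates, has at most `2 ^ n` members. -/
lemma key_card_le {α : Type*} [DecidableEq α] (n : ℕ) (F : Finset (Set (α → Bool)))
    (hdisj : (↑F : Set (Set (α → Bool))).Pairwise Disjoint)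
    (hform : ∀ A ∈ F, ∃ (S : Finset α) (u : α → Bool),
      A = {v : α → Bool | ∀ p ∈ S, v p = u p} ∧ S.card ≤ n) :
    F.card ≤ 2 ^ n := by
  classical
  choose S u hA hcard using hform
  set T : Finset α := F.attach.biUnion (fun A => S A.1 A.2) with hT
  have hST : ∀ (A : Set (α → Bool)) (hAF : A ∈ F), S A hAF ⊆ T := by
    intro A hAF
    exact Finset.subset_biUnion_of_mem (fun B : {A // A ∈ F} => S B.1 B.2)
      (Finset.mem_attach F ⟨A, hAF⟩)
  set P : {A // A ∈ F} → Finset ((↥T) → Bool) := fun A =>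
    Finset.univ.filter fun w => ∀ p : ↥T, ↑p ∈ S A.1 A.2 → w p = u A.1 A.2 ↑p with hP
  have hcardP : ∀ A : {A // A ∈ F}, (P A).card = 2 ^ (T.card - (S A.1 A.2).card) :=
    fun A => cyl_filter_card T (S A.1 A.2) (hST A.1 A.2) (u A.1 A.2)
  have hdisjP : ∀ A ∈ F.attach, ∀ B ∈ F.attach, A ≠ B → Disjoint (P A) (P B) := by
    intro A _ B _ hne
    rw [Finset.disjoint_left]
    intro w hwA hwB
    have hAB : A.1 ≠ B.1 := fun h => hne (Subtype.ext h)
    have hd : Disjoint A.1 B.1 := hdisj A.2 B.2 hAB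
    set v : α → Bool := fun p => if h : p ∈ T then w ⟨p, h⟩ else false with hv
    have hvmem : ∀ (C : {A // A ∈ F}), (∀ p : ↥T, ↑p ∈ S C.1 C.2 → w p = u C.1 C.2 ↑p)
        → v ∈ C.1 := by
      intro C hwC
      rw [hA C.1 C.2]
      intro p hp
      have hpT : p ∈ T := hST C.1 C.2 hp
      simp only [hv, dif_pos hpT]
      exact hwC ⟨p, hpT⟩ hp
    have h1 : v ∈ A.1 := hvmem A (by simpa [hP, Finset.mem_filter] using hwA)
    have h2 : v ∈ B.1 := hvmem B (by simpa [hP, Finset.mem_filter] using hwB)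
    exact Set.disjoint_left.mp hd h1 h2
  have hsum : ∑ A ∈ F.attach, (P A).card ≤ 2 ^ T.card := by
    rw [← Finset.card_biUnion hdisjP]
    calc (F.attach.biUnion P).card ≤ (Finset.univ : Finset ((↥T) → Bool)).card :=
          Finset.card_le_card (Finset.subset_univ _)
      _ = 2 ^ T.card := by
          rw [Finset.card_univ, Fintype.card_fun, Fintype.card_bool, Fintype.card_coe]
  have hlow : ∀ A : {A // A ∈ F}, 2 ^ (T.card - n) ≤ (P A).card := by
    intro A
    rw [hcardP A]
    exact Nat.pow_le_pow_right (by norm_num)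
      (Nat.sub_le_sub_left (hcard A.1 A.2) T.card)
  have hmain : F.card * 2 ^ (T.card - n) ≤ 2 ^ n * 2 ^ (T.card - n) := by
    calc F.card * 2 ^ (T.card - n) = ∑ _A ∈ F.attach, 2 ^ (T.card - n) := by
          rw [Finset.sum_const, Finset.card_attach, smul_eq_mul]
      _ ≤ ∑ A ∈ F.attach, (P A).card := Finset.sum_le_sum (fun A _ => hlow A)
      _ ≤ 2 ^ T.card := hsum
      _ ≤ 2 ^ n * 2 ^ (T.card - n) := by
          rw [← pow_add]
          exact Nat.pow_le_pow_right (by norm_num) (by omega)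
  exact Nat.le_of_mul_le_mul_right hmain (Nat.pow_pos (by norm_num))

/-- A pairwise disjoint family of nonempty cylinders over finite sets of coordinates
is countable. -/
theorem pairwise_disjoint_cylinders_countable
    {α : Type*} (𝒜 : Set (Set (α → Bool)))
    (hne : ∀ A ∈ 𝒜, A.Nonempty)
    (hdisj : 𝒜.Pairwise fun A B => Disjoint A B)
    (hform : ∀ A ∈ 𝒜, ∃ (S : Finset α) (u : α → Bool),
      A = {v : α → Bool | ∀ p ∈ S, v p = u p}) :
    𝒜.Countable := by
  classical
  set 𝒜n : ℕ → Set (Set (α → Bool)) := fun n =>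
    {A ∈ 𝒜 | ∃ (S : Finset α) (u : α → Bool),
      A = {v : α → Bool | ∀ p ∈ S, v p = u p} ∧ S.card ≤ n} with h𝒜n
  have hcover : 𝒜 = ⋃ n, 𝒜n n := by
    apply Set.Subset.antisymm
    · intro A hA
      obtain ⟨S, u, hSu⟩ := hform A hA
      exact Set.mem_iUnion.mpr ⟨S.card, hA, S, u, hSu, le_refl _⟩
    · intro A hA
      obtain ⟨n, hn, -⟩ := Set.mem_iUnion.mp hA
      exact hn
  rw [hcover]
  apply Set.countable_iUnion
  intro n
  apply Set.Finite.countable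
  by_contra hinf
  obtain ⟨F, hF, hFcard⟩ := Set.Infinite.exists_subset_card_eq hinf (2 ^ n + 1)
  have hle : F.card ≤ 2 ^ n := by
    apply key_card_le n F
    · exact hdisj.mono (hF.trans (fun A hA => hA.1))
    · intro A hAF
      obtain ⟨-, S, u, hSu, hScard⟩ := hF hAF
      exact ⟨S, u, hSu, hScard⟩
  omega
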